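/- Let G : ℝ^n → ℝ^{m_G} be C² with retraction π satisfying lim_{t→0⁺}(π(x+tv)-x)/t = v and π continuous. Let x be feasible (G(x) ≤ 0), ε ≥ 0, and v satisfy ∇G_i(x)·v < 0 for all i ∈ I_ε(x) = {i : G_i(x) ≥ -ε}. Fix β₀ > 0, β ∈ (0,1). Then there exists K ∈ ℕ such that G(π(x + β₀β^k v)) ≤ 0 componentwise for all k > K. -/
import Mathlib


open Filter Topology Asymptotics

/-- Feasibility of small retracted steps: if `v` is strictly feasible with respect to
the `ε`-active inequality constraints at a feasible point `x`, then the retracted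
points `π(x + β₀βᵏ v)` are feasible for all sufficiently large `k`. -/
theorem retracted_steps_feasible (n mG : ℕ)
    (G : EuclideanSpace ℝ (Fin n) → EuclideanSpace ℝ (Fin mG))
    (hG : ContDiff ℝ 2 G)
    (π : EuclideanSpace ℝ (Fin n) → EuclideanSpace ℝ (Fin n))
    (hπcont : Continuous π)
    (x v : EuclideanSpace ℝ (Fin n)) (hπx : π x = x)
    (hπlim : Tendsto (fun t : ℝ => t⁻¹ • (π (x + t • v) - x))
      (nhdsWithin 0 (Set.Ioi 0)) (𝓝 v))
    (hfeas : ∀ i, G x i ≤ 0)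
    (ε : ℝ) (hε : 0 ≤ ε)
    (hv : ∀ i, -ε ≤ G x i → fderiv ℝ G x v i < 0)
    (β₀ β : ℝ) (hβ₀ : 0 < β₀) (hβ : β ∈ Set.Ioo (0 : ℝ) 1) :
    ∃ K : ℕ, ∀ k > K, ∀ i, G (π (x + (β₀ * β ^ k) • v)) i ≤ 0 := by
  classical
  set l : Filter ℝ := nhdsWithin 0 (Set.Ioi 0) with hl
  set φ : ℝ → EuclideanSpace ℝ (Fin n) := fun t => π (x + t • v) with hφ
  have hφ0 : Tendsto φ l (𝓝 x) := by
    have hc : Continuous φ := hπcont.comp (by continuity)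
    have h := hc.tendsto 0
    have : φ 0 = x := by simp [hφ, hπx]
    rw [this] at h
    exact h.mono_left nhdsWithin_le_nhds
  have hGd : Differentiable ℝ G := hG.differentiable (by norm_num)
  have hdiff : HasFDerivAt G (fderiv ℝ G x) x := (hGd x).hasFDerivAt
  set f' := fderiv ℝ G x with hf'
  have htpos : ∀ᶠ t in l, (0:ℝ) < t := self_mem_nhdsWithin
  have hBigO : (fun t => φ t - x) =O[l] fun t : ℝ => t := by
    rw [isBigO_iff]
    refine ⟨‖v‖ + 1, ?_⟩
    have h1 : ∀ᶠ t in l, ‖t⁻¹ • (φ t - x)‖ < ‖v‖ + 1 := by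
      exact hπlim.norm.eventually_lt_const (show ‖v‖ < ‖v‖ + 1 by linarith)
    filter_upwards [h1, htpos] with t h1 h2
    have : ‖φ t - x‖ = t * ‖t⁻¹ • (φ t - x)‖ := by
      rw [norm_smul, norm_inv, Real.norm_eq_abs, abs_of_pos h2]
      field_simp
    rw [this, Real.norm_eq_abs, abs_of_pos h2]
    nlinarith [norm_nonneg (t⁻¹ • (φ t - x))]
  have key : Tendsto (fun t : ℝ => t⁻¹ • (G (φ t) - G x)) l (𝓝 (f' v)) := by
    have hlo := (hdiff.isLittleO.comp_tendsto hφ0).trans_isBigO hBigO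
    have h0 := hlo.tendsto_inv_smul_nhds_zero
    have hterm2 : Tendsto (fun t : ℝ => f' (t⁻¹ • (φ t - x))) l (𝓝 (f' v)) :=
      (f'.continuous.tendsto v).comp hπlim
    have hsum := h0.add hterm2
    rw [zero_add] at hsum
    refine hsum.congr fun t => ?_
    show t⁻¹ • (G (φ t) - G x - f' (φ t - x)) + f' (t⁻¹ • (φ t - x)) =
      t⁻¹ • (G (φ t) - G x)
    rw [map_smul, smul_sub, sub_add_cancel]
  have keyi : ∀ i, Tendsto (fun t : ℝ => t⁻¹ * (G (φ t) i - G x i)) l (𝓝 (f' v i)) := by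
    intro i
    have := ((EuclideanSpace.proj (𝕜 := ℝ) i).continuous.tendsto (f' v)).comp key
    refine this.congr fun t => ?_
    simp [EuclideanSpace.proj]
  have ht : Tendsto (fun k : ℕ => β₀ * β ^ k) atTop l := by
    refine tendsto_nhdsWithin_of_tendsto_nhds_of_eventually_within _ ?_ ?_
    · have := (tendsto_pow_atTop_nhds_zero_of_lt_one hβ.1.le hβ.2).const_mul β₀
      simpa using this
    · exact Eventually.of_forall fun k => mul_pos hβ₀ (pow_pos hβ.1 k)
  have hei : ∀ i, ∀ᶠ k in (atTop : Filter ℕ), G (φ (β₀ * β ^ k)) i ≤ 0 := by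
    intro i
    have hE : ∀ᶠ t in l, G (φ t) i ≤ 0 := ?_
    · exact ht.eventually hE
    by_cases hca : -ε ≤ G x i
    · have hneg := hv i hca
      have h1 : ∀ᶠ t in l, t⁻¹ * (G (φ t) i - G x i) < 0 :=
        (keyi i).eventually_lt_const hneg
      filter_upwards [h1, htpos] with t h1 h2
      have hinv : (0:ℝ) < t⁻¹ := inv_pos.mpr h2
      nlinarith [hfeas i]
    · push_neg at hca
      have hlt : G x i < 0 := lt_of_lt_of_le hca (by linarith)
      have hc : Tendsto (fun t => G (φ t) i) l (𝓝 (G x i)) :=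
        ((EuclideanSpace.proj (𝕜 := ℝ) i).continuous.tendsto _).comp
          ((hGd.continuous.tendsto x).comp hφ0)
      filter_upwards [hc.eventually_lt_const hlt] with t h
      exact h.le
  have hall : ∀ᶠ k in (atTop : Filter ℕ), ∀ i, G (φ (β₀ * β ^ k)) i ≤ 0 :=
    eventually_all.mpr hei
  rw [eventually_atTop] at hall
  obtain ⟨K, hK⟩ := hall
  exact ⟨K, fun k hk i => hK k (le_of_lt hk) i⟩
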